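/- Let 0 < q < 1, u, v > 0, and α > 0. Then N_q(x^{α-1})(u;v) = ((1-q)^{α-1}/v^α) u^{α-1} Γ_q(α), where N_q is the series-defined q-Natural transform of the first type and Γ_q(α) = (q;q)_∞/(q^α;q)_∞ (1-q)^{1-α}. -/

import Mathlib

/-- The q-Pochhammer symbol `(a;q)_n`. -/
noncomputable def qPoch (q a : ℝ) (n : ℕ) : ℝ := ∏ k ∈ Finset.range n, (1 - a * q ^ k)

/-- `(a;q)_∞`. -/
noncomputable def qPochInf (q a : ℝ) : ℝ := ∏' k : ℕ, (1 - a * q ^ k)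

/-- The first-type q-Natural transform. -/
noncomputable def qNatural (q : ℝ) (f : ℝ → ℝ) (u v : ℝ) : ℝ :=
  qPochInf q q / v * ∑' k : ℕ, q ^ k * f (u / v * q ^ k) / qPoch q q k

/-- The q-gamma function `Γ_q(α) = (q;q)_∞/(q^α;q)_∞ · (1-q)^{1-α}`. -/
noncomputable def qGamma (q x : ℝ) : ℝ :=
  qPochInf q q / qPochInf q (q ^ x) * (1 - q) ^ (1 - x)

open Real Filter

section helpers
variable {q z : ℝ}

lemma factor_pos (hq0 : 0 < q) (hq1 : q < 1) (hz0 : 0 ≤ z) (hz1 : z < 1) (k : ℕ) : 0 < 1 - z * q ^ k := by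
  have h1 : q ^ k ≤ 1 := pow_le_one₀ hq0.le hq1.le
  have h2 : z * q ^ k ≤ z * 1 := by
    apply mul_le_mul_of_nonneg_left h1 hz0
  nlinarith

lemma factor_le_one (hq0 : 0 < q) (hz0 : 0 ≤ z) (k : ℕ) : 1 - z * q ^ k ≤ 1 := by
  have : 0 ≤ z * q ^ k := mul_nonneg hz0 (pow_nonneg hq0.le k)
  linarith

lemma qPoch_pos (hq0 : 0 < q) (hq1 : q < 1) (hz0 : 0 ≤ z) (hz1 : z < 1) (n : ℕ) : 0 < qPoch q z n :=
  Finset.prod_pos fun k _ => factor_pos hq0 hq1 hz0 hz1 k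

lemma summable_log (hq0 : 0 < q) (hq1 : q < 1) (hz0 : 0 ≤ z) (hz1 : z < 1) :
    Summable fun k => Real.log (1 - z * q ^ k) := by
  apply Summable.of_norm_bounded (g := fun k => z / (1 - z) * q ^ k)
  · exact (summable_geometric_of_lt_one hq0.le hq1).mul_left _
  intro k
  have hf := factor_pos hq0 hq1 hz0 hz1 k
  have hle := factor_le_one hq0 hz0 k
  have hlog : Real.log (1 - z * q ^ k) ≤ 0 := Real.log_nonpos (by linarith) hle
  rw [Real.norm_eq_abs, abs_of_nonpos hlog]
  have h2 : Real.log (1 - z * q ^ k)⁻¹ ≤ (1 - z * q ^ k)⁻¹ - 1 :=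
    Real.log_le_sub_one_of_pos (inv_pos.2 hf)
  rw [Real.log_inv] at h2
  have h3 : (1 - z * q ^ k)⁻¹ - 1 = z * q ^ k / (1 - z * q ^ k) := by
    field_simp
    ring
  rw [h3] at h2
  have h4 : z * q ^ k / (1 - z * q ^ k) ≤ z * q ^ k / (1 - z) := by
    apply div_le_div_of_nonneg_left (mul_nonneg hz0 (pow_nonneg hq0.le k)) (by linarith)
    have : z * q ^ k ≤ z := by
      calc z * q ^ k ≤ z * 1 := mul_le_mul_of_nonneg_left (pow_le_one₀ hq0.le hq1.le) hz0
      _ = z := mul_one z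
    linarith
  calc -Real.log (1 - z * q ^ k) ≤ z * q ^ k / (1 - z * q ^ k) := by linarith
    _ ≤ z * q ^ k / (1 - z) := h4
    _ = z / (1 - z) * q ^ k := by ring

lemma hasProd_qPochInf (hq0 : 0 < q) (hq1 : q < 1) (hz0 : 0 ≤ z) (hz1 : z < 1) :
    HasProd (fun k : ℕ => 1 - z * q ^ k) (qPochInf q z) ∧
    qPochInf q z = Real.exp (∑' k : ℕ, Real.log (1 - z * q ^ k)) := by
  have hs := (summable_log hq0 hq1 hz0 hz1).hasSum
  have heq : (fun k : ℕ => 1 - z * q ^ k)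
      = (Real.exp ∘ fun k : ℕ => Real.log (1 - z * q ^ k)) :=
    funext fun k => (Real.exp_log (factor_pos hq0 hq1 hz0 hz1 k)).symm
  have h : HasProd (fun k : ℕ => 1 - z * q ^ k)
      (Real.exp (∑' k : ℕ, Real.log (1 - z * q ^ k))) := heq ▸ hs.rexp
  have h2 : qPochInf q z = Real.exp (∑' k : ℕ, Real.log (1 - z * q ^ k)) := h.tprod_eq
  exact ⟨h2 ▸ h, h2⟩

lemma qPochInf_pos (hq0 : 0 < q) (hq1 : q < 1) (hz0 : 0 ≤ z) (hz1 : z < 1) : 0 < qPochInf q z := by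
  rw [(hasProd_qPochInf hq0 hq1 hz0 hz1).2]
  exact Real.exp_pos _

end helpers

noncomputable def eulerS (q z : ℝ) : ℝ := ∑' k : ℕ, z ^ k / qPoch q q k

section euler
variable {q z : ℝ}

lemma qPochInf_le_qPoch (hq0 : 0 < q) (hq1 : q < 1) (n : ℕ) :
    qPochInf q q ≤ qPoch q q n := by
  have hz0 : (0:ℝ) ≤ q ^ (n + 1) := pow_nonneg hq0.le _
  have hz1 : q ^ (n + 1) < 1 := pow_lt_one₀ hq0.le hq1 (Nat.succ_ne_zero n)
  have hpowf : (fun i : ℕ => 1 - q * q ^ (i + n)) = fun i : ℕ => 1 - q ^ (n + 1) * q ^ i := by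
    funext i
    rw [pow_add, pow_succ]
    ring
  have hmul' : Multipliable (fun i : ℕ => 1 - q * q ^ (i + n)) := by
    rw [hpowf]
    exact (hasProd_qPochInf hq0 hq1 hz0 hz1).1.multipliable
  have hsplit := Multipliable.prod_mul_tprod_nat_mul' (f := fun k : ℕ => 1 - q * q ^ k) (k := n) hmul'
  rw [hpowf] at hsplit
  have htail1 : qPochInf q (q ^ (n + 1)) ≤ 1 := by
    rw [(hasProd_qPochInf hq0 hq1 hz0 hz1).2]
    calc Real.exp (∑' k : ℕ, Real.log (1 - q ^ (n + 1) * q ^ k)) ≤ Real.exp 0 := by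
          apply Real.exp_le_exp.2
          apply tsum_nonpos
          intro k
          exact Real.log_nonpos (factor_pos hq0 hq1 hz0 hz1 k).le (factor_le_one hq0 hz0 k)
      _ = 1 := Real.exp_zero
  have htail0 : 0 < qPochInf q (q ^ (n + 1)) := qPochInf_pos hq0 hq1 hz0 hz1
  have hP : 0 < qPoch q q n := qPoch_pos hq0 hq1 hq0.le hq1 n
  have heq : qPochInf q q = qPoch q q n * qPochInf q (q ^ (n + 1)) := hsplit.symm
  rw [heq]
  nlinarith

lemma summable_eulerS (hq0 : 0 < q) (hq1 : q < 1) (hz0 : 0 ≤ z) (hz1 : z < 1) :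
    Summable fun k : ℕ => z ^ k / qPoch q q k := by
  have hC : 0 < qPochInf q q := qPochInf_pos hq0 hq1 hq0.le hq1
  apply Summable.of_nonneg_of_le
    (fun k => div_nonneg (pow_nonneg hz0 k) (qPoch_pos hq0 hq1 hq0.le hq1 k).le)
    (fun k => ?_) (((summable_geometric_of_lt_one hz0 hz1)).div_const (qPochInf q q))
  exact div_le_div_of_nonneg_left (pow_nonneg hz0 k) hC (qPochInf_le_qPoch hq0 hq1 k)

lemma qPoch_succ (n : ℕ) : qPoch q z (n + 1) = qPoch q z n * (1 - z * q ^ n) :=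
  Finset.prod_range_succ _ n

lemma eulerS_funcEq (hq0 : 0 < q) (hq1 : q < 1) (hz0 : 0 ≤ z) (hz1 : z < 1) :
    eulerS q (q * z) = (1 - z) * eulerS q z := by
  have hS := summable_eulerS hq0 hq1 hz0 hz1
  have hqz0 : 0 ≤ q * z := mul_nonneg hq0.le hz0
  have hqz1 : q * z < 1 := by nlinarith
  have hSq := summable_eulerS hq0 hq1 hqz0 hqz1
  set g : ℕ → ℝ := fun k => z ^ k / qPoch q q k - (q * z) ^ k / qPoch q q k with hg
  have hgsum : Summable g := hS.sub hSq
  have hkey : eulerS q z - eulerS q (q * z) = ∑' k, g k := (Summable.tsum_sub hS hSq).symm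
  have hg0 : g 0 = 0 := by simp [hg, qPoch]
  have hgsucc : ∀ k : ℕ, g (k + 1) = z * (z ^ k / qPoch q q k) := by
    intro k
    have hP : qPoch q q k ≠ 0 := (qPoch_pos hq0 hq1 hq0.le hq1 k).ne'
    have hf : (1 : ℝ) - q * q ^ k ≠ 0 := (factor_pos hq0 hq1 hq0.le hq1 k).ne'
    simp only [hg, qPoch_succ]
    field_simp
    ring
  have h2 : ∑' k, g k = z * eulerS q z := by
    rw [Summable.tsum_eq_zero_add hgsum, hg0, zero_add]
    calc ∑' k, g (k + 1) = ∑' k, z * (z ^ k / qPoch q q k) := tsum_congr hgsucc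
      _ = z * eulerS q z := tsum_mul_left
  have h3 := hkey.trans h2
  unfold eulerS at *
  linarith

lemma eulerS_iter (hq0 : 0 < q) (hq1 : q < 1) (hz0 : 0 ≤ z) (hz1 : z < 1) (n : ℕ) :
    eulerS q (q ^ n * z) = qPoch q z n * eulerS q z := by
  induction n with
  | zero => simp [qPoch]
  | succ n ih =>
    have hz0' : 0 ≤ q ^ n * z := mul_nonneg (pow_nonneg hq0.le n) hz0
    have hz1' : q ^ n * z < 1 := by
      have h1 : q ^ n ≤ 1 := pow_le_one₀ hq0.le hq1.le
      have h2 : 0 < q ^ n := pow_pos hq0 n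
      nlinarith
    have h := eulerS_funcEq hq0 hq1 hz0' hz1'
    have harg : q * (q ^ n * z) = q ^ (n + 1) * z := by ring
    rw [harg] at h
    rw [h, ih, qPoch_succ]
    ring

set_option maxHeartbeats 1000000 in
lemma eulerS_sub_one_bound (hq0 : 0 < q) (hq1 : q < 1) (hz0 : 0 ≤ z) (hz1 : z < 1)
    {w : ℝ} (hw0 : 0 ≤ w) (hwz : w ≤ z) :
    |eulerS q w - 1| ≤ w * ((1 - z)⁻¹ / qPochInf q q) := by
  have hC : 0 < qPochInf q q := qPochInf_pos hq0 hq1 hq0.le hq1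
  have hw1 : w < 1 := lt_of_le_of_lt hwz hz1
  have hSw := summable_eulerS hq0 hq1 hw0 hw1
  have hshift : eulerS q w - 1 = ∑' k, w ^ (k + 1) / qPoch q q (k + 1) := by
    rw [eulerS, Summable.tsum_eq_zero_add hSw]
    simp [qPoch]
  have hsum2 : Summable (fun k : ℕ => w ^ (k + 1) / qPoch q q (k + 1)) :=
    (summable_nat_add_iff 1).2 hSw
  have hsum3 : Summable (fun k : ℕ => w * (z ^ k / qPochInf q q)) :=
    (((summable_geometric_of_lt_one hz0 hz1)).div_const (qPochInf q q)).mul_left w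
  have hpt : ∀ k : ℕ, w ^ (k + 1) / qPoch q q (k + 1) ≤ w * (z ^ k / qPochInf q q) := by
    intro k
    have h1 : w ^ (k + 1) ≤ w * z ^ k := by
      rw [pow_succ']
      exact mul_le_mul_of_nonneg_left (pow_le_pow_left₀ hw0 hwz k) hw0
    have h2 : w * (z ^ k / qPochInf q q) = (w * z ^ k) / qPochInf q q := by ring
    rw [h2]
    exact div_le_div₀ (mul_nonneg hw0 (pow_nonneg hz0 k)) h1 hC
      (qPochInf_le_qPoch hq0 hq1 (k + 1))
  have hnn : 0 ≤ ∑' k, w ^ (k + 1) / qPoch q q (k + 1) :=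
    tsum_nonneg fun k => div_nonneg (pow_nonneg hw0 _) (qPoch_pos hq0 hq1 hq0.le hq1 _).le
  have hle : (∑' k, w ^ (k + 1) / qPoch q q (k + 1)) ≤ ∑' k, w * (z ^ k / qPochInf q q) :=
    Summable.tsum_le_tsum hpt hsum2 hsum3
  rw [hshift, abs_of_nonneg hnn]
  calc (∑' k, w ^ (k + 1) / qPoch q q (k + 1)) ≤ ∑' k, w * (z ^ k / qPochInf q q) := hle
    _ = w * ((∑' k : ℕ, z ^ k) / qPochInf q q) := by rw [tsum_mul_left, tsum_div_const]
    _ = w * ((1 - z)⁻¹ / qPochInf q q) := by rw [tsum_geometric_of_lt_one hz0 hz1]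

lemma eulerS_tendsto_one (hq0 : 0 < q) (hq1 : q < 1) (hz0 : 0 ≤ z) (hz1 : z < 1) :
    Filter.Tendsto (fun n : ℕ => eulerS q (q ^ n * z)) Filter.atTop (nhds 1) := by
  set B : ℝ := (1 - z)⁻¹ / qPochInf q q with hB
  have hbd : ∀ n : ℕ, ‖eulerS q (q ^ n * z) - 1‖ ≤ q ^ n * (z * B) := by
    intro n
    have h1 : 0 ≤ q ^ n * z := mul_nonneg (pow_nonneg hq0.le n) hz0
    have h2 : q ^ n * z ≤ z := by
      have h3 : q ^ n ≤ 1 := pow_le_one₀ hq0.le hq1.le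
      nlinarith
    have := eulerS_sub_one_bound hq0 hq1 hz0 hz1 h1 h2
    rw [Real.norm_eq_abs]
    calc |eulerS q (q ^ n * z) - 1| ≤ q ^ n * z * B := this
      _ = q ^ n * (z * B) := by ring
  have hg : Filter.Tendsto (fun n : ℕ => q ^ n * (z * B)) Filter.atTop (nhds 0) := by
    have := (tendsto_pow_atTop_nhds_zero_of_lt_one hq0.le hq1).mul_const (z * B)
    simpa using this
  have h0 : Filter.Tendsto (fun n : ℕ => eulerS q (q ^ n * z) - 1) Filter.atTop (nhds 0) :=
    squeeze_zero_norm hbd hg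
  have := h0.add_const 1
  simpa using this

lemma euler_identity (hq0 : 0 < q) (hq1 : q < 1) (hz0 : 0 ≤ z) (hz1 : z < 1) :
    qPochInf q z * eulerS q z = 1 := by
  have hmul := (hasProd_qPochInf hq0 hq1 hz0 hz1).1.multipliable
  have h1 : Filter.Tendsto (fun n : ℕ => qPoch q z n * eulerS q z) Filter.atTop
      (nhds (qPochInf q z * eulerS q z)) := by
    have := hmul.hasProd.tendsto_prod_nat
    rw [hmul.hasProd.tprod_eq] at this
    exact this.mul_const (eulerS q z)
  have h2 : Filter.Tendsto (fun n : ℕ => qPoch q z n * eulerS q z) Filter.atTop (nhds 1) := by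
    apply Filter.Tendsto.congr (f₁ := fun n : ℕ => eulerS q (q ^ n * z))
    · exact fun n => eulerS_iter hq0 hq1 hz0 hz1 n
    · exact eulerS_tendsto_one hq0 hq1 hz0 hz1
  exact tendsto_nhds_unique h1 h2

end euler

/-- For `0 < q < 1`, `u, v > 0`, `α > 0`,
`N_q(x^{α-1})(u;v) = ((1-q)^{α-1}/v^α) u^{α-1} Γ_q(α)`. -/
theorem qNatural_rpow (q u v α : ℝ) (hq0 : 0 < q) (hq1 : q < 1)
    (hu : 0 < u) (hv : 0 < v) (hα : 0 < α) :
    qNatural q (fun x => x ^ (α - 1)) u v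
      = (1 - q) ^ (α - 1) / v ^ α * u ^ (α - 1) * qGamma q α := by
  have hz0 : (0:ℝ) ≤ q ^ α := Real.rpow_nonneg hq0.le α
  have hz1 : q ^ α < 1 := Real.rpow_lt_one hq0.le hq1 hα
  have hPz : 0 < qPochInf q (q ^ α) := qPochInf_pos hq0 hq1 hz0 hz1
  have hPq : 0 < qPochInf q q := qPochInf_pos hq0 hq1 hq0.le hq1
  have heuler : eulerS q (q ^ α) = 1 / qPochInf q (q ^ α) := by
    have h := euler_identity hq0 hq1 hz0 hz1
    field_simp
    linarith [h]
  have hterm : ∀ k : ℕ, q ^ k * ((u / v * q ^ k) ^ (α - 1)) / qPoch q q k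
      = (u / v) ^ (α - 1) * ((q ^ α) ^ k / qPoch q q k) := by
    intro k
    have huv : (0:ℝ) ≤ u / v := (div_pos hu hv).le
    have hqk : (0:ℝ) ≤ q ^ k := pow_nonneg hq0.le k
    rw [Real.mul_rpow huv hqk]
    have hkey : q ^ k * (q ^ k : ℝ) ^ (α - 1) = (q ^ α) ^ k := by
      rw [← Real.rpow_natCast q k, ← Real.rpow_mul hq0.le, ← Real.rpow_add hq0,
        show (k:ℝ) + (k:ℝ) * (α - 1) = α * (k:ℝ) from by ring,
        Real.rpow_mul hq0.le, Real.rpow_natCast]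
    calc q ^ k * ((u / v) ^ (α - 1) * (q ^ k : ℝ) ^ (α - 1)) / qPoch q q k
        = (u / v) ^ (α - 1) * ((q ^ k * (q ^ k : ℝ) ^ (α - 1)) / qPoch q q k) := by ring
      _ = (u / v) ^ (α - 1) * ((q ^ α) ^ k / qPoch q q k) := by rw [hkey]
  have hsum : (∑' k : ℕ, q ^ k * ((u / v * q ^ k) ^ (α - 1)) / qPoch q q k)
      = (u / v) ^ (α - 1) * eulerS q (q ^ α) := by
    rw [tsum_congr hterm, tsum_mul_left]
    rfl
  rw [qNatural, qGamma]
  rw [hsum, heuler]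
  have h1q : (0:ℝ) < 1 - q := by linarith
  have hA : (1 - q) ^ (1 - α) = ((1 - q) ^ (α - 1))⁻¹ := by
    rw [show (1 - α) = -(α - 1) by ring, Real.rpow_neg h1q.le]
  have hdiv : (u / v) ^ (α - 1) = u ^ (α - 1) / v ^ (α - 1) :=
    Real.div_rpow hu.le hv.le _
  have hv' : v ^ α = v * v ^ (α - 1) := by
    have h := Real.rpow_add hv 1 (α - 1)
    rw [Real.rpow_one, show (1:ℝ) + (α - 1) = α from by ring] at h
    exact h
  have hApos : (0:ℝ) < (1 - q) ^ (α - 1) := Real.rpow_pos_of_pos h1q _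
  have hvp : (0:ℝ) < v ^ (α - 1) := Real.rpow_pos_of_pos hv _
  rw [hdiv, hA, hv']
  field_simp
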